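/- If a sequence (a_n) of rationals satisfies a linear recurrence with polynomial coefficients p₀(n)a_n + p₁(n)a_{n+1} + ... + p_r(n)a_{n+r} = 0 for all n ≥ 0, with p_r not identically zero, then the generating function Σ a_n xⁿ satisfies a linear differential equation with polynomial coefficients (it is D-finite). -/

import Mathlib

open Finset

open PowerSeries Polynomial in
private lemma coeff_iter_deriv (g : PowerSeries ℚ) (i n : ℕ) :
    PowerSeries.coeff n (PowerSeries.derivativeFun^[i] g)
      = ((n+i).descFactorial i : ℚ) * PowerSeries.coeff (n+i) g := by
  induction i generalizing n with
  | zero => simp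
  | succ i ih =>
    erw [Function.iterate_succ_apply', coeff_derivativeFun, ih]
    have h2 : n + (i+1) = n+1+i := by omega
    rw [h2, Nat.descFactorial_succ, (by omega : n + 1 + i - i = n + 1)]
    push_cast
    ring

private lemma ff_expand : ∀ (n : ℕ) (P : Polynomial ℚ), P.natDegree ≤ n →
    ∃ c : ℕ → ℚ, P = ∑ j ∈ range (n+1), Polynomial.C (c j) * descPochhammer ℚ j := by
  intro n
  induction n with
  | zero =>
    intro P hP
    refine ⟨fun _ => P.coeff 0, ?_⟩
    rw [Finset.sum_range_one, descPochhammer_zero, mul_one]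
    exact Polynomial.eq_C_of_natDegree_le_zero hP
  | succ n ih =>
    intro P hP
    set Q := P - Polynomial.C (P.coeff (n+1)) * descPochhammer ℚ (n+1) with hQ
    have hdp : (descPochhammer ℚ (n+1)).natDegree = n+1 := descPochhammer_natDegree ℚ (n+1)
    have hQdeg : Q.natDegree ≤ n := by
      rw [Polynomial.natDegree_le_iff_coeff_eq_zero]
      intro m hm
      rcases eq_or_lt_of_le (Nat.succ_le_of_lt hm) with h | h
      · rw [hQ, Polynomial.coeff_sub, Polynomial.coeff_C_mul, ← h]
        have : (descPochhammer ℚ (n+1)).coeff (n+1) = 1 := by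
          have := monic_descPochhammer ℚ (n+1)
          rw [Polynomial.Monic.def, Polynomial.leadingCoeff, hdp] at this
          exact this
        rw [this, mul_one, sub_self]
      · rw [hQ, Polynomial.coeff_sub, Polynomial.coeff_C_mul]
        rw [Polynomial.coeff_eq_zero_of_natDegree_lt (lt_of_le_of_lt hP h),
          Polynomial.coeff_eq_zero_of_natDegree_lt
            (by rw [hdp]; exact h : (descPochhammer ℚ (n+1)).natDegree < m)]
        ring
    obtain ⟨c, hc⟩ := ih Q hQdeg
    refine ⟨Function.update c (n+1) (P.coeff (n+1)), ?_⟩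
    rw [Finset.sum_range_succ, Function.update_self,
      Finset.sum_congr rfl (fun j hj => by
        rw [Function.update_of_ne (by have := Finset.mem_range.mp hj; omega)]),
      ← hc, hQ]
    ring

/-- If a sequence of rationals is P-recursive (it satisfies a linear recurrence
with polynomial coefficients, with nonzero leading coefficient polynomial),
then its generating function is D-finite: it satisfies a linear differential
equation with polynomial coefficients, not all zero. -/
theorem generating_function_D_finite (a : ℕ → ℚ) (r : ℕ) (p : ℕ → Polynomial ℚ)
    (hp : p r ≠ 0)
    (hrec : ∀ n : ℕ, ∑ i ∈ range (r + 1), (p i).eval (n : ℚ) * a (n + i) = 0) :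
    ∃ (d : ℕ) (q : ℕ → Polynomial ℚ), (∃ i ≤ d, q i ≠ 0) ∧
      ∑ i ∈ range (d + 1),
          (q i : PowerSeries ℚ) *
            (PowerSeries.derivativeFun^[i] (PowerSeries.mk a)) = 0 := by
  classical
  set f := PowerSeries.mk a with hf
  set N := (range (r+1)).sup (fun i => (p i).natDegree) with hN
  set Qd : ℕ → Polynomial ℚ :=
    fun i => if i ≤ r then (p i).comp (Polynomial.X - Polynomial.C (i:ℚ)) else 0 with hQd
  have hQdeg : ∀ i, (Qd i).natDegree ≤ N := by
    intro i
    simp only [hQd]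
    by_cases h : i ≤ r
    · rw [if_pos h, Polynomial.natDegree_comp, Polynomial.natDegree_X_sub_C, mul_one]
      exact Finset.le_sup (f := fun i => (p i).natDegree)
        (Finset.mem_range.mpr (Nat.lt_succ_of_le h))
    · rw [if_neg h]; simp
  choose c hc using fun i => ff_expand N (Qd i) (hQdeg i)
  set q : ℕ → Polynomial ℚ :=
    fun j => ∑ i ∈ range (r+1), Polynomial.C (c i j) * Polynomial.X^(r - i + j) with hq
  set S : PowerSeries ℚ :=
    ∑ j ∈ range (N+1), (q j : PowerSeries ℚ) * (PowerSeries.derivativeFun^[j] f) with hS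
  -- evaluation identity
  have heval : ∀ i ∈ range (r+1), ∀ m : ℕ,
      ∑ j ∈ range (N+1), c i j * (m.descFactorial j : ℚ) = (p i).eval ((m:ℚ) - i) := by
    intro i hi m
    have hir : i ≤ r := by have := Finset.mem_range.mp hi; omega
    have h1 : (Qd i).eval (m:ℚ) = (p i).eval ((m:ℚ) - i) := by
      simp only [hQd]
      simp only [if_pos hir, Polynomial.eval_comp, Polynomial.eval_sub, Polynomial.eval_X,
        Polynomial.eval_C]
    rw [← h1, hc i, Polynomial.eval_finset_sum]
    exact Finset.sum_congr rfl fun j _ => by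
      rw [Polynomial.eval_mul, Polynomial.eval_C, descPochhammer_eval_eq_descFactorial]
  -- coefficient formula for S
  have hScoeff : ∀ n : ℕ, PowerSeries.coeff n S
      = ∑ i ∈ range (r+1), ∑ j ∈ range (N+1),
          c i j * (if r - i + j ≤ n
            then ((n - (r - i + j) + j).descFactorial j : ℚ) * a (n - (r - i + j) + j)
            else 0) := by
    intro n
    have hqcoe : ∀ j, ((q j : Polynomial ℚ) : PowerSeries ℚ)
        = ∑ i ∈ range (r+1), PowerSeries.C (c i j) * (PowerSeries.X)^(r-i+j) := by
      intro j
      simp only [hq, ← Polynomial.coeToPowerSeries.ringHom_apply, map_sum, map_mul, map_pow]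
      simp [Polynomial.coeToPowerSeries.ringHom_apply, Polynomial.coe_C, Polynomial.coe_X]
    have main : ∀ j, PowerSeries.coeff n
          ((q j : PowerSeries ℚ) * (PowerSeries.derivativeFun^[j] f))
        = ∑ i ∈ range (r+1),
            c i j * (if r - i + j ≤ n
              then ((n - (r - i + j) + j).descFactorial j : ℚ) * a (n - (r - i + j) + j)
              else 0) := by
      intro j
      rw [hqcoe j, Finset.sum_mul, map_sum]
      refine Finset.sum_congr rfl fun i _ => ?_
      rw [mul_assoc, PowerSeries.coeff_C_mul, PowerSeries.coeff_X_pow_mul']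
      congr 1
      split_ifs with h
      · rw [coeff_iter_deriv, hf, PowerSeries.coeff_mk]
      · rfl
    rw [hS, map_sum, Finset.sum_congr rfl fun j _ => main j, Finset.sum_comm]
  have hSzero : ∀ n : ℕ, r ≤ n → PowerSeries.coeff n S = 0 := by
    intro n hn
    rw [hScoeff n]
    have step : ∀ i ∈ range (r+1),
        ∑ j ∈ range (N+1), c i j * (if r - i + j ≤ n
              then ((n - (r - i + j) + j).descFactorial j : ℚ) * a (n - (r - i + j) + j)
              else 0)
        = (p i).eval (((n - r : ℕ) : ℚ)) * a ((n - r) + i) := by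
      intro i hi
      have hir : i ≤ r := by have := Finset.mem_range.mp hi; omega
      have h1 : ∀ j ∈ range (N+1),
          c i j * (if r - i + j ≤ n
              then ((n - (r - i + j) + j).descFactorial j : ℚ) * a (n - (r - i + j) + j)
              else 0)
          = c i j * (((n - r + i).descFactorial j : ℚ)) * a (n - r + i) := by
        intro j _
        split_ifs with h
        · rw [(by omega : n - (r - i + j) + j = n - r + i), mul_assoc]
        · have hlt : n - r + i < j := by omega
          rw [Nat.descFactorial_eq_zero_iff_lt.mpr hlt]
          push_cast
          ring
      rw [Finset.sum_congr rfl h1, ← Finset.sum_mul, heval i hi (n - r + i)]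
      congr 2
      push_cast [Nat.cast_sub hn]
      ring
    rw [Finset.sum_congr rfl step, hrec (n - r)]
  -- q N is nonzero
  have hqN : q N ≠ 0 := by
    obtain ⟨i0, hi0mem, hi0⟩ :=
      Finset.exists_mem_eq_sup (range (r+1)) (by simp) (fun i => (p i).natDegree)
    have hex : ∃ i, i ≤ r ∧ p i ≠ 0 ∧ (p i).natDegree = N := by
      by_cases h : p i0 = 0
      · refine ⟨r, le_refl r, hp, le_antisymm ?_ ?_⟩
        · rw [hN]; exact Finset.le_sup (f := fun i => (p i).natDegree)
            (Finset.mem_range.mpr (by omega))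
        · rw [hN, hi0, h, Polynomial.natDegree_zero]; exact Nat.zero_le _
      · exact ⟨i0, by have := Finset.mem_range.mp hi0mem; omega, h, (hN.trans hi0).symm⟩
    obtain ⟨i', hi'r, hpi', hdeg⟩ := hex
    have hQdi' : Qd i' = (p i').comp (Polynomial.X - Polynomial.C (i':ℚ)) := by
      simp only [hQd, if_pos hi'r]
    have hQdeg' : (Qd i').natDegree = N := by
      rw [hQdi', Polynomial.natDegree_comp, Polynomial.natDegree_X_sub_C, mul_one, hdeg]
    have hQne : Qd i' ≠ 0 := by
      rw [hQdi']
      intro h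
      apply hpi'
      have hlc : (Qd i').leadingCoeff = (p i').leadingCoeff := by
        rw [hQdi', Polynomial.leadingCoeff_comp (by rw [Polynomial.natDegree_X_sub_C]; omega),
          Polynomial.leadingCoeff_X_sub_C, one_pow, mul_one]
      rw [hQdi'] at hlc
      rw [h, Polynomial.leadingCoeff_zero] at hlc
      exact Polynomial.leadingCoeff_eq_zero.mp hlc.symm
    have hcoeffN : (Qd i').coeff N = c i' N := by
      rw [hc i', Polynomial.finset_sum_coeff, Finset.sum_eq_single N]
      · rw [Polynomial.coeff_C_mul]
        have : (descPochhammer ℚ N).coeff N = 1 := by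
          have hm := monic_descPochhammer ℚ N
          have hd := descPochhammer_natDegree ℚ N
          rw [Polynomial.Monic.def, Polynomial.leadingCoeff, hd] at hm
          exact hm
        rw [this, mul_one]
      · intro j hj hjne
        rw [Polynomial.coeff_C_mul,
          Polynomial.coeff_eq_zero_of_natDegree_lt
            (by rw [descPochhammer_natDegree]; have := Finset.mem_range.mp hj; omega), mul_zero]
      · intro h; exact absurd (Finset.self_mem_range_succ N) h
    have hcN : c i' N ≠ 0 := by
      rw [← hcoeffN]
      have : (Qd i').coeff N = (Qd i').leadingCoeff := by
        rw [Polynomial.leadingCoeff, hQdeg']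
      rw [this]
      exact Polynomial.leadingCoeff_ne_zero.mpr hQne
    intro hqN0
    apply hcN
    have : (q N).coeff (r - i' + N) = c i' N := by
      simp only [hq]
      rw [Polynomial.finset_sum_coeff, Finset.sum_eq_single i']
      · rw [Polynomial.coeff_C_mul, Polynomial.coeff_X_pow, if_pos rfl, mul_one]
      · intro i hi hine
        rw [Polynomial.coeff_C_mul, Polynomial.coeff_X_pow,
          if_neg (by have := Finset.mem_range.mp hi; omega), mul_zero]
      · intro h; exact absurd (Finset.mem_range.mpr (by omega)) h
    rw [hqN0, Polynomial.coeff_zero] at this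
    exact this.symm
  set Cp : Polynomial ℚ :=
    ∑ k ∈ range r, Polynomial.C (PowerSeries.coeff k S) * Polynomial.X^k with hCp
  have hSC : S = (Cp : PowerSeries ℚ) := by
    ext n
    rw [Polynomial.coeff_coe, hCp, Polynomial.finset_sum_coeff]
    by_cases hn : n < r
    · rw [Finset.sum_eq_single n]
      · rw [Polynomial.coeff_C_mul, Polynomial.coeff_X_pow, if_pos rfl, mul_one]
      · intro k _ hk
        rw [Polynomial.coeff_C_mul, Polynomial.coeff_X_pow, if_neg (by omega), mul_zero]
      · intro h; exact absurd (Finset.mem_range.mpr hn) h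
    · rw [hSzero n (by omega)]
      refine (Finset.sum_eq_zero fun k hk => ?_).symm
      rw [Polynomial.coeff_C_mul, Polynomial.coeff_X_pow,
        if_neg (by have := Finset.mem_range.mp hk; omega), mul_zero]
  by_cases hC0 : Cp = 0
  · exact ⟨N, q, ⟨N, le_refl N, hqN⟩, by rw [← hS, hSC, hC0]; simp⟩
  · -- homogenize the inhomogeneous equation S = Cp
    set A : ℕ → Polynomial ℚ := fun k => if k ≤ N then q k else 0 with hA
    set B : ℕ → Polynomial ℚ := fun k => if 1 ≤ k then A (k-1) else 0 with hB
    set q2 : ℕ → Polynomial ℚ := fun k =>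
      Cp * Polynomial.derivative (A k) - Polynomial.derivative Cp * A k + Cp * B k with hq2
    have hq2top : q2 (N+1) = Cp * q N := by
      simp only [hq2, hA, hB]
      norm_num
    have hDsum : ∀ (s : Finset ℕ) (g : ℕ → PowerSeries ℚ),
        PowerSeries.derivativeFun (∑ k ∈ s, g k) = ∑ k ∈ s, PowerSeries.derivativeFun (g k) :=
      fun s g => map_sum (PowerSeries.derivative ℚ) g s
    have hdS : PowerSeries.derivativeFun S
        = ∑ j ∈ range (N+1), ((Polynomial.derivative (q j) : Polynomial ℚ) : PowerSeries ℚ)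
            * (PowerSeries.derivativeFun^[j] f)
          + ∑ j ∈ range (N+1), (q j : PowerSeries ℚ) * (PowerSeries.derivativeFun^[j+1] f) := by
      rw [hS, hDsum, ← Finset.sum_add_distrib]
      refine Finset.sum_congr rfl fun j _ => ?_
      rw [PowerSeries.derivativeFun_mul, smul_eq_mul, smul_eq_mul,
        (show PowerSeries.derivativeFun ((q j : Polynomial ℚ) : PowerSeries ℚ) = ((Polynomial.derivative (q j) : Polynomial ℚ) : PowerSeries ℚ) from PowerSeries.derivativeFun_coe (q j)), Function.iterate_succ_apply']
      ring
    have expand : ∑ k ∈ range (N+2), (q2 k : PowerSeries ℚ) * (PowerSeries.derivativeFun^[k] f)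
        = (Cp : PowerSeries ℚ) * (PowerSeries.derivativeFun S)
          - ((Polynomial.derivative Cp : Polynomial ℚ) : PowerSeries ℚ) * S := by
      have hterm : ∀ k, (q2 k : PowerSeries ℚ)
          = (Cp : PowerSeries ℚ) * ((Polynomial.derivative (A k) : Polynomial ℚ) : PowerSeries ℚ)
            - ((Polynomial.derivative Cp : Polynomial ℚ) : PowerSeries ℚ)
                * ((A k : Polynomial ℚ) : PowerSeries ℚ)
            + (Cp : PowerSeries ℚ) * ((B k : Polynomial ℚ) : PowerSeries ℚ) := by
        intro k
        simp only [hq2]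
        push_cast [Polynomial.coe_add, Polynomial.coe_sub, Polynomial.coe_mul]
        ring
      calc ∑ k ∈ range (N+2), (q2 k : PowerSeries ℚ) * (PowerSeries.derivativeFun^[k] f)
          = (∑ k ∈ range (N+2), (Cp : PowerSeries ℚ)
                * (↑(Polynomial.derivative (A k)) : PowerSeries ℚ)
                * (PowerSeries.derivativeFun^[k] f))
            - (∑ k ∈ range (N+2), (↑(Polynomial.derivative Cp) : PowerSeries ℚ)
                * (↑(A k) : PowerSeries ℚ) * (PowerSeries.derivativeFun^[k] f))
            + (∑ k ∈ range (N+2), (Cp : PowerSeries ℚ) * (↑(B k) : PowerSeries ℚ)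
                * (PowerSeries.derivativeFun^[k] f)) := by
            rw [← Finset.sum_sub_distrib, ← Finset.sum_add_distrib]
            refine Finset.sum_congr rfl fun k _ => ?_
            rw [hterm k]; ring
        _ = (Cp : PowerSeries ℚ) * (PowerSeries.derivativeFun S)
            - ((Polynomial.derivative Cp : Polynomial ℚ) : PowerSeries ℚ) * S := by
            have e1 : ∑ k ∈ range (N+2), (Cp : PowerSeries ℚ)
                  * (↑(Polynomial.derivative (A k)) : PowerSeries ℚ)
                  * (PowerSeries.derivativeFun^[k] f)
                = (Cp : PowerSeries ℚ) * ∑ j ∈ range (N+1),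
                    (↑(Polynomial.derivative (q j)) : PowerSeries ℚ)
                      * (PowerSeries.derivativeFun^[j] f) := by
              rw [Finset.sum_range_succ, Finset.mul_sum]
              have : A (N+1) = 0 := by simp [hA]
              rw [this]
              simp only [map_zero, Polynomial.coe_zero, mul_zero, zero_mul, add_zero]
              refine Finset.sum_congr rfl fun k hk => ?_
              have : A k = q k := by
                simp only [hA]; rw [if_pos (by have := Finset.mem_range.mp hk; omega)]
              rw [this, mul_assoc]
            have e2 : ∑ k ∈ range (N+2), (↑(Polynomial.derivative Cp) : PowerSeries ℚ)
                  * (↑(A k) : PowerSeries ℚ) * (PowerSeries.derivativeFun^[k] f)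
                = (↑(Polynomial.derivative Cp) : PowerSeries ℚ) * S := by
              rw [Finset.sum_range_succ, hS, Finset.mul_sum]
              have : A (N+1) = 0 := by simp [hA]
              rw [this]
              simp only [Polynomial.coe_zero, mul_zero, zero_mul, add_zero]
              refine Finset.sum_congr rfl fun k hk => ?_
              have : A k = q k := by
                simp only [hA]; rw [if_pos (by have := Finset.mem_range.mp hk; omega)]
              rw [this, mul_assoc]
            have e3 : ∑ k ∈ range (N+2), (Cp : PowerSeries ℚ) * (↑(B k) : PowerSeries ℚ)
                  * (PowerSeries.derivativeFun^[k] f)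
                = (Cp : PowerSeries ℚ) * ∑ j ∈ range (N+1),
                    (q j : PowerSeries ℚ) * (PowerSeries.derivativeFun^[j+1] f) := by
              rw [Finset.sum_range_succ', Finset.mul_sum]
              have hB0 : B 0 = 0 := by simp [hB]
              rw [hB0]
              simp only [Polynomial.coe_zero, mul_zero, zero_mul, add_zero]
              refine Finset.sum_congr rfl fun k hk => ?_
              have : B (k+1) = q k := by
                simp only [hB, hA]
                rw [if_pos (by omega), Nat.add_sub_cancel,
                  if_pos (by have := Finset.mem_range.mp hk; omega)]
              rw [this, mul_assoc]
            rw [e1, e2, e3, hdS]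
            ring
    refine ⟨N+1, q2, ⟨N+1, le_refl _, by rw [hq2top]; exact mul_ne_zero hC0 hqN⟩, ?_⟩
    have : ∑ k ∈ range (N+2), (q2 k : PowerSeries ℚ) * (PowerSeries.derivativeFun^[k] f) = 0 := by
      rw [expand, hSC, (show PowerSeries.derivativeFun (Cp : PowerSeries ℚ) = ((Polynomial.derivative Cp : Polynomial ℚ) : PowerSeries ℚ) from PowerSeries.derivativeFun_coe Cp)]
      ring
    simpa using this
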